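/- The group of all automorphisms of the Archdeacon embedding Π_{m,n} fixing 0 consists exactly of the multiplication maps x ↦ ηx for η ∈ H; in particular it contains no orientation-reversing automorphism and is cyclic of order mn. -/

import Mathlib

/-- The group of all automorphisms of the Archdeacon embedding `Π_{m,n}`
fixing `0` consists exactly of the multiplication maps `x ↦ ηx` for `η ∈ H`; in particular it
contains no orientation-reversing automorphism and is cyclic of order `mn` (the set `H` is
generated by a single element of multiplicative order `mn`). -/
theorem archdeacon_full_stabilizer_of_zero
    (m n : ℕ) (hm : 3 ≤ m) (hn : 3 ≤ n) (hmo : Odd m) (hno : Odd n)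
    (hcop : Nat.Coprime m n)
    (F : Type*) [Field F] [Fintype F] (hcard : Fintype.card F = 2 * m * n + 1)
    (ε ξ : F) (hε : orderOf ε = m) (hξ : orderOf ξ = n)
    (H : Set F) (hH : ∀ x : F, x ∈ H ↔ ∃ i < m, ∃ j < n, x = ε ^ i * ξ ^ j)
    (ρ₀ : Equiv.Perm F)
    (hρ : ∀ a : F, (a ∈ H → ρ₀ a = -(ξ * a)) ∧ (a ∉ H → ρ₀ a = -(ε * a))) :
    (∀ σ : F → F, Function.Bijective σ → σ 0 = 0 →
      (((∀ x y : F, x ≠ y → σ (x + ρ₀ (y - x)) = σ x + ρ₀ (σ y - σ x)) ∨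
        (∀ x y : F, x ≠ y → σ (x + ρ₀ (y - x)) = σ x + ρ₀⁻¹ (σ y - σ x))) ↔
        ∃ η ∈ H, ∀ x : F, σ x = η * x)) ∧
    (∀ σ : F → F, Function.Bijective σ → σ 0 = 0 →
      ¬ (∀ x y : F, x ≠ y → σ (x + ρ₀ (y - x)) = σ x + ρ₀⁻¹ (σ y - σ x))) ∧
    (∃ η₀ ∈ H, orderOf η₀ = m * n ∧ ∀ x : F, x ∈ H ↔ ∃ k : ℕ, x = η₀ ^ k) := by
  classical
  have hm0 : 0 < m := by omega
  have hn0 : 0 < n := by omega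
  have hN0 : 0 < m * n := Nat.mul_pos hm0 hn0
  have hNodd : Odd (m * n) := hmo.mul hno
  -- characteristic is odd
  have htwo : (2 : F) ≠ 0 := by
    intro h
    have hr2 : ringChar F = 2 := by
      have hdvd : ringChar F ∣ 2 := (ringChar.spec F 2).mp (by exact_mod_cast h)
      rcases (Nat.dvd_prime Nat.prime_two).mp hdvd with h1 | h1
      · exact absurd h1 (CharP.ringChar_ne_one (R := F))
      · exact h1
    have hcml := FiniteField.even_card_of_char_two hr2
    rw [hcard, Nat.mul_assoc] at hcml
    omega
  have hm1ne : (-1 : F) ≠ 1 := by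
    intro h; apply htwo; linear_combination -h
  -- powers of ε and ξ
  have hεpow : ε ^ m = 1 := by rw [← hε]; exact pow_orderOf_eq_one ε
  have hξpow : ξ ^ n = 1 := by rw [← hξ]; exact pow_orderOf_eq_one ξ
  have hεN : ε ^ (m * n) = 1 := by rw [pow_mul, hεpow, one_pow]
  have hξN : ξ ^ (m * n) = 1 := by rw [mul_comm, pow_mul, hξpow, one_pow]
  have hε0 : ε ≠ 0 := by
    intro h; rw [h, zero_pow hm0.ne'] at hεpow; exact zero_ne_one hεpow
  have hξ0 : ξ ≠ 0 := by
    intro h; rw [h, zero_pow hn0.ne'] at hξpow; exact zero_ne_one hξpow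
  -- power congruence helper
  have powcongr : ∀ (a : F) (d : ℕ), a ^ d = 1 → ∀ s t : ℕ, s % d = t % d → a ^ s = a ^ t := by
    intro a d hd s t hst
    have e : ∀ u : ℕ, a ^ u = a ^ (u % d) := by
      intro u
      conv_lhs => rw [← Nat.mod_add_div u d]
      rw [pow_add, pow_mul, hd, one_pow, mul_one]
    rw [e s, e t, hst]
  -- membership characterization : x ∈ H ↔ x ^ (m*n) = 1
  have hpow1 : ∀ a b : ℕ, (ε ^ a * ξ ^ b) ^ (m * n) = 1 := by
    intro a b
    rw [mul_pow, show (ε ^ a) ^ (m * n) = 1 from by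
        rw [← pow_mul, mul_comm, pow_mul, hεN, one_pow],
      show (ξ ^ b) ^ (m * n) = 1 from by
        rw [← pow_mul, mul_comm, pow_mul, hξN, one_pow], one_mul]
  have hmem : ∀ x : F, x ∈ H ↔ x ^ (m * n) = 1 := by
    have hinj : Function.Injective
        (fun p : Fin m × Fin n => ε ^ (p.1 : ℕ) * ξ ^ (p.2 : ℕ)) := by
      rintro ⟨i, j⟩ ⟨i', j'⟩ hij
      simp only at hij
      have e : ∀ a b : ℕ, (ε ^ a * ξ ^ b) ^ n = ε ^ (a * n) := by
        intro a b
        rw [mul_pow, show (ξ ^ b) ^ n = 1 from by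
            rw [← pow_mul, mul_comm, pow_mul, hξpow, one_pow], mul_one, ← pow_mul]
      have h1 : ε ^ ((i : ℕ) * n) = ε ^ ((i' : ℕ) * n) := by
        rw [← e i j, ← e i' j', hij]
      have hu : (Units.mk0 ε hε0) ^ ((i : ℕ) * n) = (Units.mk0 ε hε0) ^ ((i' : ℕ) * n) :=
        Units.ext (by
          rw [Units.val_pow_eq_pow_val, Units.val_pow_eq_pow_val, Units.val_mk0]; exact h1)
      have h2 := pow_eq_pow_iff_modEq.mp hu
      rw [← orderOf_units, Units.val_mk0, hε] at h2
      have h3 : (i : ℕ) ≡ (i' : ℕ) [MOD m] := Nat.ModEq.cancel_right_of_coprime hcop h2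
      have hi : (i : ℕ) = (i' : ℕ) := by
        have h4 := h3
        unfold Nat.ModEq at h4
        rwa [Nat.mod_eq_of_lt i.isLt, Nat.mod_eq_of_lt i'.isLt] at h4
      have h4 : ξ ^ (j : ℕ) = ξ ^ (j' : ℕ) := by
        rw [hi] at hij
        exact mul_left_cancel₀ (pow_ne_zero _ hε0) hij
      have hu' : (Units.mk0 ξ hξ0) ^ ((j : ℕ)) = (Units.mk0 ξ hξ0) ^ ((j' : ℕ)) :=
        Units.ext (by
          rw [Units.val_pow_eq_pow_val, Units.val_pow_eq_pow_val, Units.val_mk0]; exact h4)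
      have h5 := pow_eq_pow_iff_modEq.mp hu'
      rw [← orderOf_units, Units.val_mk0, hξ] at h5
      have hj : (j : ℕ) = (j' : ℕ) := by
        unfold Nat.ModEq at h5
        rwa [Nat.mod_eq_of_lt j.isLt, Nat.mod_eq_of_lt j'.isLt] at h5
      exact Prod.ext (Fin.ext hi) (Fin.ext hj)
    have hsub : Finset.image (fun p : Fin m × Fin n => ε ^ (p.1 : ℕ) * ξ ^ (p.2 : ℕ))
        Finset.univ ⊆ (Polynomial.nthRoots (m * n) (1 : F)).toFinset := by
      intro x hx
      rw [Finset.mem_image] at hx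
      obtain ⟨⟨i, j⟩, -, rfl⟩ := hx
      rw [Multiset.mem_toFinset, Polynomial.mem_nthRoots hN0]
      exact hpow1 _ _
    have hcardim : (Finset.image (fun p : Fin m × Fin n => ε ^ (p.1 : ℕ) * ξ ^ (p.2 : ℕ))
        Finset.univ).card = m * n := by
      rw [Finset.card_image_of_injective _ hinj, Finset.card_univ, Fintype.card_prod,
        Fintype.card_fin, Fintype.card_fin]
    have hcards : ((Polynomial.nthRoots (m * n) (1 : F)).toFinset).card ≤ m * n :=
      le_trans (Multiset.toFinset_card_le _) (Polynomial.card_nthRoots _ _)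
    have heq : Finset.image (fun p : Fin m × Fin n => ε ^ (p.1 : ℕ) * ξ ^ (p.2 : ℕ))
        Finset.univ = (Polynomial.nthRoots (m * n) (1 : F)).toFinset :=
      Finset.eq_of_subset_of_card_le hsub (by rw [hcardim]; exact hcards)
    intro x
    rw [hH]
    constructor
    · rintro ⟨i, hi, j, hj, rfl⟩; exact hpow1 _ _
    · intro hx
      have hx' : x ∈ (Polynomial.nthRoots (m * n) (1 : F)).toFinset := by
        rw [Multiset.mem_toFinset, Polynomial.mem_nthRoots hN0]; exact hx
      rw [← heq, Finset.mem_image] at hx'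
      obtain ⟨⟨i, j⟩, -, h⟩ := hx'
      exact ⟨i, i.isLt, j, j.isLt, h.symm⟩
  -- dichotomy
  have hsq : ∀ x : F, x ≠ 0 → x ^ (m * n) = 1 ∨ x ^ (m * n) = -1 := by
    intro x hx
    have h1 : x ^ (m * n) * x ^ (m * n) = 1 := by
      rw [← pow_add]
      have e : m * n + m * n = Fintype.card F - 1 := by
        rw [hcard, Nat.mul_assoc]; omega
      rw [e]; exact FiniteField.pow_card_sub_one_eq_one x hx
    exact mul_self_eq_one_iff.mp h1
  have hvne : ∀ v : F, v ^ (m * n) = 1 → v ≠ 0 := by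
    intro v hv h; rw [h, zero_pow hN0.ne'] at hv; exact zero_ne_one hv
  have hnegpow : ∀ x : F, (-x) ^ (m * n) = -(x ^ (m * n)) := fun x => hNodd.neg_pow x
  have hn1 : (-1 : F) ^ (m * n) = -1 := by rw [hnegpow, one_pow]
  have h1N : (1 : F) ^ (m * n) = 1 := one_pow _
  -- rotation formulas
  have hρH : ∀ x : F, x ^ (m * n) = 1 → ρ₀ x = -(ξ * x) :=
    fun x h => (hρ x).1 ((hmem x).mpr h)
  have hρN : ∀ x : F, x ^ (m * n) ≠ 1 → ρ₀ x = -(ε * x) :=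
    fun x h => (hρ x).2 (fun hx => h ((hmem x).mp hx))
  have hρ0 : ρ₀ (0 : F) = 0 := by
    rw [hρN 0 (by rw [zero_pow hN0.ne']; exact fun h => zero_ne_one h)]; ring
  have hη00 : ε * ξ ≠ 0 := mul_ne_zero hε0 hξ0
  have hρρ : ∀ x : F, ρ₀ (ρ₀ x) = ε * ξ * x := by
    intro x
    by_cases hx : x = 0
    · rw [hx, hρ0, hρ0]; ring
    rcases hsq x hx with h | h
    · rw [hρH x h]
      have h2 : (-(ξ * x)) ^ (m * n) = -1 := by rw [hnegpow, mul_pow, hξN, h, one_mul]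
      rw [hρN _ (ne_of_eq_of_ne h2 hm1ne)]; ring
    · have hne : x ^ (m * n) ≠ 1 := ne_of_eq_of_ne h hm1ne
      rw [hρN x hne]
      have h2 : (-(ε * x)) ^ (m * n) = 1 := by
        rw [hnegpow, mul_pow, hεN, h, one_mul, neg_neg]
      rw [hρH _ h2]; ring
  have hinv : ∀ x y : F, ρ₀ y = x → ρ₀⁻¹ x = y := by
    intro x y h; rw [← h]; exact Equiv.symm_apply_apply ρ₀ y
  have hρinv0 : ρ₀⁻¹ (0 : F) = 0 := hinv 0 0 hρ0
  have hρinvH : ∀ x : F, x ^ (m * n) = 1 → ρ₀⁻¹ x = -(ε⁻¹ * x) := by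
    intro x h
    apply hinv
    have h2 : (-(ε⁻¹ * x)) ^ (m * n) = -1 := by
      rw [hnegpow, mul_pow, inv_pow, hεN, inv_one, one_mul, h]
    rw [hρN _ (ne_of_eq_of_ne h2 hm1ne)]
    rw [show -(ε * -(ε⁻¹ * x)) = ε * ε⁻¹ * x from by ring, mul_inv_cancel₀ hε0, one_mul]
  have hρinvN : ∀ x : F, x ^ (m * n) = -1 → ρ₀⁻¹ x = -(ξ⁻¹ * x) := by
    intro x h
    apply hinv
    have h2 : (-(ξ⁻¹ * x)) ^ (m * n) = 1 := by
      rw [hnegpow, mul_pow, inv_pow, hξN, inv_one, one_mul, h, neg_neg]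
    rw [hρH _ h2]
    rw [show -(ξ * -(ξ⁻¹ * x)) = ξ * ξ⁻¹ * x from by ring, mul_inv_cancel₀ hξ0, one_mul]
  -- order facts
  have hεne1 : ε ≠ 1 := by intro h; rw [h, orderOf_one] at hε; omega
  have hξne1 : ξ ≠ 1 := by intro h; rw [h, orderOf_one] at hξ; omega
  have hεξ : ε ≠ ξ := by
    intro h
    rw [h, hξ] at hε
    rw [← hε] at hcop
    have h1 := hcop
    rw [Nat.Coprime, Nat.gcd_self] at h1
    omega
  have hεnξ : ε ≠ -ξ := by
    intro h
    have h1 := hεN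
    rw [h, hnegpow, hξN] at h1
    exact hm1ne h1
  have h1pε : (1 : F) + ε ≠ 0 := by
    intro h
    have h2' : ε ^ 2 = 1 := by
      have he : ε = -1 := by linear_combination h
      rw [he]; ring
    have h3 := orderOf_dvd_of_pow_eq_one h2'
    rw [hε] at h3
    have := Nat.le_of_dvd (by norm_num) h3
    omega
  have h1pξ : (1 : F) + ξ ≠ 0 := by
    intro h
    have h2' : ξ ^ 2 = 1 := by
      have he : ξ = -1 := by linear_combination h
      rw [he]; ring
    have h3 := orderOf_dvd_of_pow_eq_one h2'
    rw [hξ] at h3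
    have := Nat.le_of_dvd (by norm_num) h3
    omega
  have hε3 : ε ^ 3 = 1 → m = 3 := by
    intro h
    have h1 := orderOf_dvd_of_pow_eq_one h
    rw [hε] at h1
    have := Nat.le_of_dvd (by norm_num) h1
    omega
  have hξ3 : ξ ^ 3 = 1 → n = 3 := by
    intro h
    have h1 := orderOf_dvd_of_pow_eq_one h
    rw [hξ] at h1
    have := Nat.le_of_dvd (by norm_num) h1
    omega
  have hmn33 : ¬(m = 3 ∧ n = 3) := by
    rintro ⟨h1', h2'⟩
    rw [h1', h2'] at hcop
    norm_num [Nat.Coprime] at hcop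
  have hcube : ξ ^ 3 ≠ ε ^ 3 := by
    intro h
    apply hmn33
    constructor
    · have h1 : ε ^ (3 * n) = 1 := by
        rw [pow_mul, ← h, ← pow_mul, mul_comm, pow_mul, hξpow, one_pow]
      have hdvd : m ∣ 3 * n := by
        have h2' := orderOf_dvd_of_pow_eq_one h1; rwa [hε] at h2'
      have h3 : m ∣ 3 := hcop.dvd_of_dvd_mul_right hdvd
      have := Nat.le_of_dvd (by norm_num) h3
      omega
    · have h1 : ξ ^ (3 * m) = 1 := by
        rw [pow_mul, h, ← pow_mul, mul_comm, pow_mul, hεpow, one_pow]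
      have hdvd : n ∣ 3 * m := by
        have h2' := orderOf_dvd_of_pow_eq_one h1; rwa [hξ] at h2'
      have h3 : n ∣ 3 := hcop.symm.dvd_of_dvd_mul_right hdvd
      have := Nat.le_of_dvd (by norm_num) h3
      omega
  -- the generator ε*ξ of H
  have hη0ord : orderOf (ε * ξ) = m * n := by
    have h1 := (Commute.all ε ξ).orderOf_mul_eq_mul_orderOf_of_coprime
      (by rw [hε, hξ]; exact hcop)
    rwa [hε, hξ] at h1
  have hη0N : (ε * ξ) ^ (m * n) = 1 := by rw [mul_pow, hεN, hξN, one_mul]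
  have hHpow : ∀ x : F, x ^ (m * n) = 1 ↔ ∃ k : ℕ, x = (ε * ξ) ^ k := by
    intro x
    constructor
    · intro hx
      obtain ⟨i, hi, j, hj, rfl⟩ := (hH _).mp ((hmem _).mpr hx)
      obtain ⟨k, hk1, hk2⟩ := Nat.chineseRemainder hcop i j
      refine ⟨k, ?_⟩
      rw [mul_pow, powcongr ε m hεpow k i hk1, powcongr ξ n hξpow k j hk2]
    · rintro ⟨k, rfl⟩
      rw [← pow_mul, mul_comm k (m * n), pow_mul, hη0N, one_pow]
  -- Pythagorean triple of elements of H
  have pyth : ∃ a b : F, a ≠ 0 ∧ b ≠ 0 ∧ a ^ 2 + 1 = b ^ 2 := by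
    obtain ⟨g, hg⟩ := IsCyclic.exists_generator (α := Fˣ)
    have hgord : orderOf g = 2 * m * n := by
      rw [orderOf_eq_card_of_forall_mem_zpowers hg, Nat.card_eq_fintype_card,
        Fintype.card_units, hcard, Nat.add_sub_cancel]
    set t : F := (g : F) with ht
    have ht0 : t ≠ 0 := Units.ne_zero g
    have ht4 : t ^ 4 ≠ 1 := by
      intro h
      have h4 : g ^ 4 = 1 := Units.ext (by
        rw [Units.val_pow_eq_pow_val, Units.val_one]; exact h)
      have hd := orderOf_dvd_of_pow_eq_one h4
      rw [hgord, Nat.mul_assoc] at hd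
      have h9 : 3 * 3 ≤ m * n := Nat.mul_le_mul hm hn
      have := Nat.le_of_dvd (by norm_num) hd
      omega
    have ht2 : t ^ 2 ≠ 1 := by
      intro h; apply ht4; rw [show (4 : ℕ) = 2 * 2 from rfl, pow_mul, h, one_pow]
    have ht2' : t ^ 2 ≠ -1 := by
      intro h; apply ht4; rw [show (4 : ℕ) = 2 * 2 from rfl, pow_mul, h]; ring
    refine ⟨(1 - t ^ 2) / (2 * t), (1 + t ^ 2) / (2 * t), ?_, ?_, ?_⟩
    · apply div_ne_zero
      · exact sub_ne_zero.mpr (Ne.symm ht2)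
      · exact mul_ne_zero htwo ht0
    · apply div_ne_zero
      · intro h; exact ht2' (by linear_combination h)
      · exact mul_ne_zero htwo ht0
    · field_simp
      ring
  -- helper products
  have hy1ξ : ξ * (1 + ξ⁻¹) = 1 + ξ := by
    rw [mul_add, mul_one, mul_inv_cancel₀ hξ0]; ring
  have hy2ε : ε * (-1 + -ε⁻¹) = -(1 + ε) := by
    rw [mul_add, mul_neg, mul_neg, mul_one, mul_inv_cancel₀ hε0]; ring
  have hy10 : (1 + ξ⁻¹ : F) ≠ 0 := by
    intro h
    have h' : ξ * (1 + ξ⁻¹) = ξ * 0 := by rw [h]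
    rw [hy1ξ, mul_zero] at h'
    exact h1pξ h'
  have hy20 : (-1 + -ε⁻¹ : F) ≠ 0 := by
    intro h
    have h' : ε * (-1 + -ε⁻¹) = ε * 0 := by rw [h]
    rw [hy2ε, mul_zero] at h'
    exact h1pε (neg_eq_zero.mp h')
  -- ===================== no reversing automorphism =====================
  have noRev : ∀ σ : F → F, Function.Bijective σ → σ 0 = 0 →
      (∀ x y : F, x ≠ y → σ (x + ρ₀ (y - x)) = σ x + ρ₀⁻¹ (σ y - σ x)) → False := by
    intro σ hbij h0 R
    have hA : ∀ v : F, σ (ρ₀ v) = ρ₀⁻¹ (σ v) := by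
      intro v
      by_cases hv : v = 0
      · rw [hv, hρ0, h0, hρinv0]
      · have h := R 0 v (fun h => hv h.symm)
        rw [sub_zero, zero_add, h0, sub_zero, zero_add] at h
        exact h
    have hBgen : ∀ u : F, ρ₀⁻¹ (ρ₀⁻¹ u) = (ε * ξ)⁻¹ * u := by
      intro u
      have h1 : ρ₀ (ρ₀ ((ε * ξ)⁻¹ * u)) = u := by
        rw [hρρ, show ε * ξ * ((ε * ξ)⁻¹ * u) = ε * ξ * (ε * ξ)⁻¹ * u from by ring,
          mul_inv_cancel₀ hη00, one_mul]
      have h2 : ρ₀⁻¹ u = ρ₀ ((ε * ξ)⁻¹ * u) := hinv _ _ h1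
      rw [h2, (show ∀ z : F, ρ₀⁻¹ (ρ₀ z) = z from fun z => Equiv.symm_apply_apply ρ₀ z)]
    have hB : ∀ v : F, σ (ε * ξ * v) = (ε * ξ)⁻¹ * σ v := by
      intro v
      rw [← hρρ v, hA, hA, hBgen]
    have hc0 : σ 1 ≠ 0 := fun h => one_ne_zero (hbij.injective (h.trans h0.symm))
    have hσH : ∀ v : F, v ^ (m * n) = 1 → v * σ v = σ 1 := by
      have key : ∀ k : ℕ, (ε * ξ) ^ k * σ ((ε * ξ) ^ k) = σ 1 := by
        intro k
        induction k with
        | zero => rw [pow_zero, one_mul]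
        | succ k ih =>
          have hrw : (ε * ξ) ^ (k + 1) = ε * ξ * (ε * ξ) ^ k := by ring
          rw [hrw, hB]
          rw [show ε * ξ * (ε * ξ) ^ k * ((ε * ξ)⁻¹ * σ ((ε * ξ) ^ k))
              = ε * ξ * (ε * ξ)⁻¹ * ((ε * ξ) ^ k * σ ((ε * ξ) ^ k)) from by ring,
            mul_inv_cancel₀ hη00, one_mul]
          exact ih
      intro v hv
      obtain ⟨k, rfl⟩ := (hHpow v).mp hv
      exact key k
    -- the star identity
    have star : ∀ x : F, x ≠ 0 → σ (x + ρ₀⁻¹ (-x)) = σ x + ρ₀ (-(σ x)) := by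
      intro x hx
      have hyne : x + ρ₀⁻¹ (-x) ≠ x := by
        intro h
        have h1 : ρ₀⁻¹ (-x) = 0 := by
          have := add_eq_left.mp h
          exact this
        have h2 := congrArg ρ₀ h1
        rw [(show ∀ z : F, ρ₀ (ρ₀⁻¹ z) = z from fun z => Equiv.apply_symm_apply ρ₀ z), hρ0] at h2
        exact hx (neg_eq_zero.mp h2)
      have hR := R x (x + ρ₀⁻¹ (-x)) (Ne.symm hyne)
      rw [add_sub_cancel_left, (show ∀ z : F, ρ₀ (ρ₀⁻¹ z) = z from fun z => Equiv.apply_symm_apply ρ₀ z), add_neg_cancel, h0] at hR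
      have h3 : ρ₀⁻¹ (σ (x + ρ₀⁻¹ (-x)) - σ x) = -(σ x) := eq_neg_of_add_eq_zero_right hR.symm
      have h4 := congrArg ρ₀ h3
      rw [(show ∀ z : F, ρ₀ (ρ₀⁻¹ z) = z from fun z => Equiv.apply_symm_apply ρ₀ z)] at h4
      linear_combination h4
    have hr1 : ρ₀⁻¹ (-(1 : F)) = ξ⁻¹ := by
      rw [hρinvN _ (by rw [hnegpow, one_pow])]; ring
    have hr2 : ρ₀⁻¹ (-(-1 : F)) = -ε⁻¹ := by
      rw [neg_neg, hρinvH _ h1N]; ring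
    have e1 := star 1 one_ne_zero
    rw [hr1] at e1
    have e2 := star (-1) (neg_ne_zero.mpr one_ne_zero)
    rw [hr2] at e2
    rcases hsq (σ 1) hc0 with hcH | hcN
    · -- σ 1 ∈ H
      have hσNeg : ∀ v : F, v ≠ 0 → v ^ (m * n) = -1 → ε * v * σ v = ξ * σ 1 := by
        intro v hv0 hvN
        have hwH : (-(ξ⁻¹ * v)) ^ (m * n) = 1 := by
          rw [hnegpow, mul_pow, inv_pow, hξN, inv_one, one_mul, hvN, neg_neg]
        have hρw : ρ₀ (-(ξ⁻¹ * v)) = v := by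
          rw [hρH _ hwH, show -(ξ * -(ξ⁻¹ * v)) = ξ * ξ⁻¹ * v from by ring,
            mul_inv_cancel₀ hξ0, one_mul]
        have hσw := hσH _ hwH
        have hσwpow : (σ (-(ξ⁻¹ * v))) ^ (m * n) = 1 := by
          have hp : (-(ξ⁻¹ * v)) ^ (m * n) * (σ (-(ξ⁻¹ * v))) ^ (m * n)
              = (σ 1) ^ (m * n) := by rw [← mul_pow, hσw]
          rw [hwH, one_mul, hcH] at hp
          exact hp
        have e : σ v = ρ₀⁻¹ (σ (-(ξ⁻¹ * v))) := by
          conv_lhs => rw [← hρw]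
          rw [hA]
        rw [hρinvH _ hσwpow] at e
        rw [e, show ε * v * -(ε⁻¹ * σ (-(ξ⁻¹ * v))) = -(ε * ε⁻¹ * (v * σ (-(ξ⁻¹ * v))))
          from by ring, mul_inv_cancel₀ hε0, one_mul]
        have h' : ξ * (-(ξ⁻¹ * v) * σ (-(ξ⁻¹ * v))) = ξ * σ 1 := by rw [hσw]
        rw [show ξ * (-(ξ⁻¹ * v) * σ (-(ξ⁻¹ * v))) = -(ξ * ξ⁻¹ * (v * σ (-(ξ⁻¹ * v))))
          from by ring, mul_inv_cancel₀ hξ0, one_mul] at h'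
        exact h'
      have hs1ne : (-(σ 1)) ^ (m * n) ≠ 1 := by
        rw [hnegpow, hcH]; exact hm1ne
      have e1' : σ (1 + ξ⁻¹) = (1 + ε) * σ 1 := by
        rw [e1, hρN _ hs1ne]; ring
      have hIor : (1 + ε) * (1 + ξ) = ξ ∨ ε * (1 + ε) * (1 + ξ) = ξ ^ 2 := by
        rcases hsq _ hy10 with k1 | k1
        · left
          have hkey := hσH _ k1
          rw [e1'] at hkey
          have h2' : ξ * ((1 + ξ⁻¹) * ((1 + ε) * σ 1)) = ξ * σ 1 := by rw [hkey]
          rw [show ξ * ((1 + ξ⁻¹) * ((1 + ε) * σ 1)) = ξ * (1 + ξ⁻¹) * ((1 + ε) * σ 1)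
            from by ring, hy1ξ] at h2'
          have h' : (1 + ε) * (1 + ξ) * σ 1 = ξ * σ 1 := by linear_combination h2'
          exact mul_right_cancel₀ hc0 h'
        · right
          have hkey := hσNeg _ hy10 k1
          rw [e1'] at hkey
          have h2' : ξ * (ε * (1 + ξ⁻¹) * ((1 + ε) * σ 1)) = ξ * (ξ * σ 1) := by rw [hkey]
          rw [show ξ * (ε * (1 + ξ⁻¹) * ((1 + ε) * σ 1))
              = ε * (ξ * (1 + ξ⁻¹)) * ((1 + ε) * σ 1) from by ring, hy1ξ] at h2'
          have h' : ε * (1 + ε) * (1 + ξ) * σ 1 = ξ ^ 2 * σ 1 := by linear_combination h2'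
          exact mul_right_cancel₀ hc0 h'
      have hsm1 := hσNeg (-1) (neg_ne_zero.mpr one_ne_zero) hn1
      have hsv : ε * σ (-1) = -(ξ * σ 1) := by linear_combination -hsm1
      have hsp : (σ (-1)) ^ (m * n) = -1 := by
        have hp : (ε * -1 * σ (-1)) ^ (m * n) = (ξ * σ 1) ^ (m * n) := by rw [hsm1]
        rw [mul_pow, mul_pow, mul_pow, hεN, hn1, hξN, hcH] at hp
        linear_combination -hp
      have e2' : σ (-1 + -ε⁻¹) = (1 + ξ) * σ (-1) := by
        rw [e2, hρH _ (by rw [hnegpow, hsp, neg_neg])]; ring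
      have hJor : (1 + ξ) * (1 + ε) = ε ∨ ξ * (1 + ε) * (1 + ξ) = ε ^ 2 := by
        rcases hsq _ hy20 with k2 | k2
        · right
          have hkey := hσH _ k2
          rw [e2'] at hkey
          have h2' : ε * ((-1 + -ε⁻¹) * ((1 + ξ) * σ (-1))) = ε * σ 1 := by rw [hkey]
          rw [show ε * ((-1 + -ε⁻¹) * ((1 + ξ) * σ (-1)))
              = ε * (-1 + -ε⁻¹) * ((1 + ξ) * σ (-1)) from by ring, hy2ε] at h2'
          have h' : ξ * (1 + ε) * (1 + ξ) * σ 1 = ε ^ 2 * σ 1 := by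
            linear_combination ε * h2' + (1 + ε) * (1 + ξ) * hsv
          exact mul_right_cancel₀ hc0 h'
        · left
          have hkey := hσNeg _ hy20 k2
          rw [e2'] at hkey
          rw [hy2ε] at hkey
          have h2' : -(1 + ε) * ((1 + ξ) * σ (-1)) = ξ * σ 1 := hkey
          have h'' : ξ * ((1 + ξ) * (1 + ε) * σ 1) = ξ * (ε * σ 1) := by
            linear_combination ε * h2' + (1 + ε) * (1 + ξ) * hsv
          have h' := mul_left_cancel₀ hξ0 h''
          exact mul_right_cancel₀ hc0 h'
      rcases hIor with hI | hI <;> rcases hJor with hJ | hJ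
      · exact hεξ (by linear_combination hI - hJ)
      · have h2' : (ε - ξ) * (ε + ξ) = 0 := by linear_combination ξ * hI - hJ
        rcases mul_eq_zero.mp h2' with h3 | h3
        · exact hεξ (by linear_combination h3)
        · exact hεnξ (by linear_combination h3)
      · have h2' : (ε - ξ) * (ε + ξ) = 0 := by linear_combination hI - ε * hJ
        rcases mul_eq_zero.mp h2' with h3 | h3
        · exact hεξ (by linear_combination h3)
        · exact hεnξ (by linear_combination h3)
      · exact hcube (by linear_combination ε * hJ - ξ * hI)
    · -- σ 1 ∉ H
      have hσNeg : ∀ v : F, v ≠ 0 → v ^ (m * n) = -1 → v * σ v = σ 1 := by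
        intro v hv0 hvN
        have hwH : (-(ξ⁻¹ * v)) ^ (m * n) = 1 := by
          rw [hnegpow, mul_pow, inv_pow, hξN, inv_one, one_mul, hvN, neg_neg]
        have hρw : ρ₀ (-(ξ⁻¹ * v)) = v := by
          rw [hρH _ hwH, show -(ξ * -(ξ⁻¹ * v)) = ξ * ξ⁻¹ * v from by ring,
            mul_inv_cancel₀ hξ0, one_mul]
        have hσw := hσH _ hwH
        have hσwpow : (σ (-(ξ⁻¹ * v))) ^ (m * n) = -1 := by
          have hp : (-(ξ⁻¹ * v)) ^ (m * n) * (σ (-(ξ⁻¹ * v))) ^ (m * n)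
              = (σ 1) ^ (m * n) := by rw [← mul_pow, hσw]
          rw [hwH, one_mul, hcN] at hp
          exact hp
        have e : σ v = ρ₀⁻¹ (σ (-(ξ⁻¹ * v))) := by
          conv_lhs => rw [← hρw]
          rw [hA]
        rw [hρinvN _ hσwpow] at e
        rw [e]
        linear_combination hσw
      have e1' : σ (1 + ξ⁻¹) = (1 + ξ) * σ 1 := by
        rw [e1, hρH _ (by rw [hnegpow, hcN, neg_neg])]; ring
      have hn3 : n = 3 := by
        apply hξ3
        have hkey : (1 + ξ⁻¹) * ((1 + ξ) * σ 1) = σ 1 := by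
          rcases hsq _ hy10 with k1 | k1
          · have h' := hσH _ k1; rwa [e1'] at h'
          · have h' := hσNeg _ hy10 k1; rwa [e1'] at h'
        have h2' : ξ * ((1 + ξ⁻¹) * ((1 + ξ) * σ 1)) = ξ * σ 1 := by rw [hkey]
        rw [show ξ * ((1 + ξ⁻¹) * ((1 + ξ) * σ 1)) = ξ * (1 + ξ⁻¹) * ((1 + ξ) * σ 1)
          from by ring, hy1ξ] at h2'
        have h' : (1 + ξ) * (1 + ξ) * σ 1 = ξ * σ 1 := by linear_combination h2'
        have hJ := mul_right_cancel₀ hc0 h'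
        linear_combination (ξ - 1) * hJ
      have hsm1' : σ (-1) = -(σ 1) := by
        have h' := hσNeg (-1) (neg_ne_zero.mpr one_ne_zero) hn1
        linear_combination -h'
      have e2' : σ (-1 + -ε⁻¹) = -((1 + ε) * σ 1) := by
        rw [e2, hsm1', neg_neg, hρN _ (ne_of_eq_of_ne hcN hm1ne)]; ring
      have hm3 : m = 3 := by
        apply hε3
        have hkey : (-1 + -ε⁻¹) * -((1 + ε) * σ 1) = σ 1 := by
          rcases hsq _ hy20 with k2 | k2
          · have h' := hσH _ k2; rwa [e2'] at h'
          · have h' := hσNeg _ hy20 k2; rwa [e2'] at h'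
        have h2' : ε * ((-1 + -ε⁻¹) * -((1 + ε) * σ 1)) = ε * σ 1 := by rw [hkey]
        rw [show ε * ((-1 + -ε⁻¹) * -((1 + ε) * σ 1))
            = ε * (-1 + -ε⁻¹) * -((1 + ε) * σ 1) from by ring, hy2ε] at h2'
        have h' : (1 + ε) * (1 + ε) * σ 1 = ε * σ 1 := by linear_combination h2'
        have hJ := mul_right_cancel₀ hc0 h'
        linear_combination (ε - 1) * hJ
      exact hmn33 ⟨hm3, hn3⟩
  -- ===================== preserving automorphisms =====================
  have pres : ∀ σ : F → F, Function.Bijective σ → σ 0 = 0 →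
      (∀ x y : F, x ≠ y → σ (x + ρ₀ (y - x)) = σ x + ρ₀ (σ y - σ x)) →
      ∃ η : F, η ^ (m * n) = 1 ∧ ∀ x : F, σ x = η * x := by
    intro σ hbij h0 P
    have hA : ∀ v : F, σ (ρ₀ v) = ρ₀ (σ v) := by
      intro v
      by_cases hv : v = 0
      · rw [hv, hρ0, h0, hρ0]
      · have h := P 0 v (fun h => hv h.symm)
        rw [sub_zero, zero_add, h0, sub_zero, zero_add] at h
        exact h
    have hB : ∀ v : F, σ (ε * ξ * v) = ε * ξ * σ v := by
      intro v
      rw [← hρρ v, hA, hA, hρρ]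
    have hc0 : σ 1 ≠ 0 := fun h => one_ne_zero (hbij.injective (h.trans h0.symm))
    have hσH : ∀ v : F, v ^ (m * n) = 1 → σ v = σ 1 * v := by
      have key : ∀ k : ℕ, σ ((ε * ξ) ^ k) = σ 1 * (ε * ξ) ^ k := by
        intro k
        induction k with
        | zero => rw [pow_zero, mul_one]
        | succ k ih =>
          have hrw : (ε * ξ) ^ (k + 1) = ε * ξ * (ε * ξ) ^ k := by ring
          rw [hrw, hB, ih]; ring
      intro v hv
      obtain ⟨k, rfl⟩ := (hHpow v).mp hv
      exact key k
    rcases hsq (σ 1) hc0 with hcH | hcN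
    · refine ⟨σ 1, hcH, ?_⟩
      intro x
      by_cases hx : x = 0
      · rw [hx, h0, mul_zero]
      rcases hsq x hx with h | h
      · exact hσH x h
      · have hwH : (-(ξ⁻¹ * x)) ^ (m * n) = 1 := by
          rw [hnegpow, mul_pow, inv_pow, hξN, inv_one, one_mul, h, neg_neg]
        have hρw : ρ₀ (-(ξ⁻¹ * x)) = x := by
          rw [hρH _ hwH, show -(ξ * -(ξ⁻¹ * x)) = ξ * ξ⁻¹ * x from by ring,
            mul_inv_cancel₀ hξ0, one_mul]
        have e : σ x = ρ₀ (σ (-(ξ⁻¹ * x))) := by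
          conv_lhs => rw [← hρw]
          rw [hA]
        rw [hσH _ hwH] at e
        have hcwH : (σ 1 * -(ξ⁻¹ * x)) ^ (m * n) = 1 := by
          rw [mul_pow, hcH, one_mul, hwH]
        rw [hρH _ hcwH] at e
        rw [e, show -(ξ * (σ 1 * -(ξ⁻¹ * x))) = ξ * ξ⁻¹ * (σ 1 * x) from by ring,
          mul_inv_cancel₀ hξ0, one_mul]
    · exfalso
      have hσNeg : ∀ v : F, v ≠ 0 → v ^ (m * n) = -1 → ξ * σ v = ε * σ 1 * v := by
        intro v hv0 hvN
        have hwH : (-(ξ⁻¹ * v)) ^ (m * n) = 1 := by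
          rw [hnegpow, mul_pow, inv_pow, hξN, inv_one, one_mul, hvN, neg_neg]
        have hρw : ρ₀ (-(ξ⁻¹ * v)) = v := by
          rw [hρH _ hwH, show -(ξ * -(ξ⁻¹ * v)) = ξ * ξ⁻¹ * v from by ring,
            mul_inv_cancel₀ hξ0, one_mul]
        have e : σ v = ρ₀ (σ (-(ξ⁻¹ * v))) := by
          conv_lhs => rw [← hρw]
          rw [hA]
        rw [hσH _ hwH] at e
        have hcw : (σ 1 * -(ξ⁻¹ * v)) ^ (m * n) = -1 := by
          rw [mul_pow, hcN, hwH, mul_one]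
        rw [hρN _ (ne_of_eq_of_ne hcw hm1ne)] at e
        rw [e, show ξ * -(ε * (σ 1 * -(ξ⁻¹ * v))) = ξ * ξ⁻¹ * (ε * σ 1 * v) from by ring,
          mul_inv_cancel₀ hξ0, one_mul]
      obtain ⟨a, b, ha, hb, hab⟩ := pyth
      have hcard2 : ∀ u : F, u ≠ 0 → (u ^ 2) ^ (m * n) = 1 := by
        intro u hu
        have hfa := FiniteField.pow_card_sub_one_eq_one u hu
        rw [hcard, Nat.add_sub_cancel] at hfa
        rw [← pow_mul, show 2 * (m * n) = 2 * m * n from by ring]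
        exact hfa
      have haH := hcard2 a ha
      have hbH := hcard2 b hb
      have hxy : (a ^ 2 : F) ≠ b ^ 2 := by
        intro h
        exact one_ne_zero (α := F) (by linear_combination hab - h)
      have hP := P (a ^ 2) (b ^ 2) hxy
      have hd : (b ^ 2 : F) - a ^ 2 = 1 := by linear_combination -hab
      rw [hd, hρH 1 h1N, hσH _ haH, hσH _ hbH] at hP
      have hd2 : σ 1 * b ^ 2 - σ 1 * a ^ 2 = σ 1 := by linear_combination (-(σ 1)) * hab
      rw [hd2, hρN _ (ne_of_eq_of_ne hcN hm1ne)] at hP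
      -- hP : σ (a^2 + -(ξ*1)) = σ 1 * a^2 + -(ε * σ 1)
      by_cases hz0 : (a ^ 2 : F) + -(ξ * 1) = 0
      · rw [hz0, h0] at hP
        have ha2 : (a ^ 2 : F) = ξ := by linear_combination hz0
        have h' : σ 1 * ξ = σ 1 * ε := by linear_combination -hP - σ 1 * ha2
        exact hεξ (mul_left_cancel₀ hc0 h').symm
      rcases hsq _ hz0 with hz1 | hz1
      · rw [hσH _ hz1] at hP
        have h' : σ 1 * ξ = σ 1 * ε := by linear_combination -hP
        exact hεξ (mul_left_cancel₀ hc0 h').symm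
      · have hzz := hσNeg _ hz0 hz1
        rw [hP] at hzz
        have h' : σ 1 * a ^ 2 * ξ = σ 1 * a ^ 2 * ε := by linear_combination hzz
        exact hεξ (mul_left_cancel₀ (mul_ne_zero hc0 (pow_ne_zero 2 ha)) h').symm
  -- ===================== assembly =====================
  refine ⟨?_, fun σ hb h0 => noRev σ hb h0, ⟨ε * ξ, (hmem _).mpr hη0N, hη0ord,
    fun x => (hmem x).trans (hHpow x)⟩⟩
  intro σ hbij h0
  constructor
  · rintro (hP | hR)
    · obtain ⟨η, hη, hσ⟩ := pres σ hbij h0 hP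
      exact ⟨η, (hmem η).mpr hη, hσ⟩
    · exact absurd hR (noRev σ hbij h0)
  · rintro ⟨η, hηH, hσ⟩
    left
    have hη1 : η ^ (m * n) = 1 := (hmem η).mp hηH
    have hcomm : ∀ a : F, ρ₀ (η * a) = η * ρ₀ a := by
      intro a
      by_cases ha : a = 0
      · rw [ha, mul_zero, hρ0, mul_zero]
      rcases hsq a ha with h | h
      · rw [hρH a h, hρH _ (by rw [mul_pow, hη1, h, one_mul])]; ring
      · have h1 : (η * a) ^ (m * n) = -1 := by rw [mul_pow, hη1, h, one_mul]
        rw [hρN a (ne_of_eq_of_ne h hm1ne), hρN _ (ne_of_eq_of_ne h1 hm1ne)]; ring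
    intro x y hxy
    rw [hσ, hσ, hσ, ← mul_sub, hcomm]
    ring
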